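/- Let $\mathbf{X}$ be a compact metric space and let $h: \mathbf{X} \times \mathbf{Y} \to [0,\infty)$ be such that $h(\cdot, y)$ is continuous for each $y$ and $\int h(x,y)\psi(dy) = 1$. If $Z_n \to Z$ weakly in $\mathcal{P}(\mathbf{X})$, then $\sup_{A \in \mathcal{B}(\mathbf{Y})}\left|\int_{\mathbf{X}}\left(\int_A h(x,y)\,\psi(dy)\right) Z_n(dx) - \int_{\mathbf{X}}\left(\int_A h(x,y)\,\psi(dy)\right) Z(dx)\right| \to 0$; i.e., the induced measurement distributions $P(dy \mid Z_n)$ converge to $P(dy \mid Z)$ in total variation. -/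
import Mathlib


open MeasureTheory Filter Topology

open scoped ENNReal

lemma aux_sigmaFinite {Y : Type*} [MeasurableSpace Y] (ψ : Measure Y) (F : Y → ℝ≥0∞)
    (hF : Measurable F) (hFint : ∫⁻ y, F y ∂ψ ≠ ∞) :
    SigmaFinite (ψ.restrict {y | F y ≠ 0}) := by
  set S := {y | F y ≠ 0} with hSdef
  have hSm : MeasurableSet S := (hF (measurableSet_singleton 0)).compl
  refine ⟨⟨⟨fun n => {y | ((n : ℝ≥0∞) + 1)⁻¹ ≤ F y} ∪ Sᶜ, fun _ => trivial, ?_, ?_⟩⟩⟩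
  · intro n
    rw [Measure.restrict_apply' hSm]
    have hsub : ({y | ((n : ℝ≥0∞) + 1)⁻¹ ≤ F y} ∪ Sᶜ) ∩ S ⊆ {y | ((n : ℝ≥0∞) + 1)⁻¹ ≤ F y} := by
      rintro y ⟨hy1 | hy1, hy2⟩
      · exact hy1
      · exact absurd hy2 hy1
    refine lt_of_le_of_lt (measure_mono hsub) ?_
    refine lt_of_le_of_lt (meas_ge_le_lintegral_div hF.aemeasurable ?_ ?_) ?_
    · exact ENNReal.inv_ne_zero.mpr (by simp)
    · exact ENNReal.inv_ne_top.mpr (by simp)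
    · exact ENNReal.div_lt_top hFint (ENNReal.inv_ne_zero.mpr (by simp))
  · ext y
    simp only [Set.mem_iUnion, Set.mem_univ, iff_true, Set.mem_union]
    by_cases hy : F y = 0
    · exact ⟨0, Or.inr (by simp [hSdef, hy])⟩
    · obtain ⟨n, hn⟩ := ENNReal.exists_inv_nat_lt hy
      refine ⟨n, Or.inl ?_⟩
      exact le_trans (ENNReal.inv_le_inv.mpr (by simp [le_add_right])) hn.le

/-- On a compact metric state space, if the measurement channel has density `h(x,y)` with
respect to `ψ` (`h ≥ 0`, continuous in `x`, `∫ h(x,y) ψ(dy) = 1`), then weak convergence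
`Zₙ → Z` of priors implies total variation convergence of the induced measurement
distributions: `sup_A |∫ (∫_A h(x,y) ψ(dy)) Zₙ(dx) - ∫ (∫_A h(x,y) ψ(dy)) Z(dx)| → 0`. -/
theorem stmt16 {X Y : Type*} [MetricSpace X] [CompactSpace X] [MeasurableSpace X]
    [BorelSpace X] [MeasurableSpace Y] (ψ : Measure Y)
    (h : X → Y → ℝ) (hmeas : Measurable (Function.uncurry h))
    (hcont : ∀ y, Continuous fun x => h x y) (hnn : ∀ x y, 0 ≤ h x y)
    (hint : ∀ x, ∫ y, h x y ∂ψ = 1)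
    (Z : ℕ → ProbabilityMeasure X) (Zl : ProbabilityMeasure X)
    (hZ : Tendsto Z atTop (𝓝 Zl)) :
    Tendsto (fun n => ⨆ A : Set Y,
        |(∫ x, (∫ y in A, h x y ∂ψ) ∂(Z n : Measure X)) -
          ∫ x, (∫ y in A, h x y ∂ψ) ∂(Zl : Measure X)|)
      atTop (𝓝 0) := by
  classical
  have hXne : Nonempty X := by
    by_contra hc
    rw [not_nonempty_iff] at hc
    have h1 : (Zl : Measure X) Set.univ = 1 := measure_univ
    rw [Set.univ_eq_empty_iff.mpr hc, measure_empty] at h1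
    exact zero_ne_one h1
  have hxmeas : ∀ x, Measurable (h x) := fun x => hmeas.of_uncurry_left
  have hxint : ∀ x, Integrable (h x) ψ := by
    intro x
    by_contra hc
    have h0 := integral_undef hc
    rw [hint x] at h0
    exact one_ne_zero h0
  have hlin : ∀ x, ∫⁻ y, ENNReal.ofReal (h x y) ∂ψ = 1 := by
    intro x
    rw [← ofReal_integral_eq_lintegral_ofReal (hxint x) (Filter.Eventually.of_forall (hnn x)),
      hint x, ENNReal.ofReal_one]
  set d : ℕ → X := TopologicalSpace.denseSeq X with hd
  set F : Y → ℝ≥0∞ := fun y => ∑' n, (2 : ℝ≥0∞)⁻¹ ^ n * ENNReal.ofReal (h (d n) y) with hF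
  have hFmeas : Measurable F := Measurable.ennreal_tsum fun n =>
    ((hxmeas (d n)).ennreal_ofReal.const_mul _)
  have hFint : ∫⁻ y, F y ∂ψ ≠ ∞ := by
    have h1 : ∫⁻ y, F y ∂ψ = ∑' (n : ℕ), (2 : ℝ≥0∞)⁻¹ ^ n := by
      simp only [hF]
      rw [lintegral_tsum fun n =>
        ((hxmeas (d n)).ennreal_ofReal.const_mul _).aemeasurable]
      congr 1
      funext n
      rw [lintegral_const_mul _ (hxmeas (d n)).ennreal_ofReal, hlin, mul_one]
    rw [h1, ENNReal.tsum_geometric, ENNReal.one_sub_inv_two]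
    simp
  set S : Set Y := {y | F y ≠ 0} with hS
  have hSm : MeasurableSet S := (hFmeas (measurableSet_singleton 0)).compl
  haveI hSsf : SigmaFinite (ψ.restrict S) := aux_sigmaFinite ψ F hFmeas hFint
  have hzero : ∀ y ∉ S, ∀ x, h x y = 0 := by
    intro y hy x
    have hy0 : F y = 0 := not_not.mp (by simpa [hS] using hy)
    have hdn : ∀ n, h (d n) y = 0 := by
      intro n
      have h2 := ENNReal.tsum_eq_zero.mp hy0 n
      rcases mul_eq_zero.mp h2 with h3 | h3
      · exact absurd h3 (pow_ne_zero _ (by simp))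
      · exact le_antisymm (ENNReal.ofReal_eq_zero.mp h3) (hnn _ _)
    have hfun : (fun x => h x y) = fun _ => (0 : ℝ) := by
      apply Continuous.ext_on (TopologicalSpace.denseRange_denseSeq X) (hcont y) continuous_const
      rintro _ ⟨n, rfl⟩
      exact hdn n
    exact congrFun hfun x
  -- master Fubini
  have key : ∀ (μ : Measure X), IsProbabilityMeasure μ → ∀ A : Set Y,
      Integrable (Function.uncurry h) (μ.prod (ψ.restrict (A ∩ S))) ∧
      ∫ x, (∫ y in A, h x y ∂ψ) ∂μ = ∫ y in A ∩ S, (∫ x, h x y ∂μ) ∂ψ := by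
    intro μ hμ A
    haveI := hμ
    have hIg : Integrable (Function.uncurry h) (μ.prod (ψ.restrict (A ∩ S))) := by
      refine ⟨hmeas.stronglyMeasurable.aestronglyMeasurable, ?_⟩
      rw [hasFiniteIntegral_iff_ofReal (f := Function.uncurry h)
        (Filter.Eventually.of_forall fun z => hnn z.1 z.2)]
      rw [lintegral_prod _ hmeas.ennreal_ofReal.aemeasurable]
      have hb : ∀ x, ∫⁻ y, ENNReal.ofReal (h x y) ∂(ψ.restrict (A ∩ S)) ≤ 1 := fun x =>
        le_trans (lintegral_mono' Measure.restrict_le_self le_rfl) (hlin x).le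
      refine lt_of_le_of_lt (lintegral_mono fun x => hb x) ?_
      simp [lintegral_one, measure_univ]
    refine ⟨hIg, ?_⟩
    have step1 : ∀ x, ∫ y in A, h x y ∂ψ = ∫ y in A ∩ S, h x y ∂ψ := by
      intro x
      rw [← setIntegral_indicator hSm]
      refine integral_congr_ae (Filter.Eventually.of_forall fun y => ?_)
      by_cases hyS : y ∈ S
      · rw [Set.indicator_of_mem hyS]
      · rw [Set.indicator_of_notMem hyS, hzero y hyS x]
    simp_rw [step1]
    exact integral_integral_swap hIg
  have gnn : ∀ (μ : Measure X) (y : Y), 0 ≤ ∫ x, h x y ∂μ := fun μ y =>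
    integral_nonneg fun x => hnn x y
  have gmeas : ∀ (μ : Measure X), SFinite μ → StronglyMeasurable (fun y => ∫ x, h x y ∂μ) :=
    fun μ hs => by
      haveI := hs
      exact hmeas.stronglyMeasurable.integral_prod_left
  have gintS : ∀ (μ : Measure X), IsProbabilityMeasure μ →
      Integrable (fun y => ∫ x, h x y ∂μ) (ψ.restrict S) := by
    intro μ hμ
    haveI := hμ
    have h1 := (key μ hμ Set.univ).1
    rw [Set.univ_inter] at h1
    exact h1.integral_prod_right
  have gtot : ∀ (μ : Measure X), IsProbabilityMeasure μ →
      ∫ y in S, (∫ x, h x y ∂μ) ∂ψ = 1 := by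
    intro μ hμ
    haveI := hμ
    have h1 := (key μ hμ Set.univ).2
    rw [Set.univ_inter] at h1
    rw [← h1]
    simp_rw [Measure.restrict_univ, hint]
    simp
  have hptwise : ∀ y, Tendsto (fun n => ∫ x, h x y ∂(Z n : Measure X)) atTop
      (𝓝 (∫ x, h x y ∂(Zl : Measure X))) := by
    intro y
    have h1 := ProbabilityMeasure.tendsto_iff_forall_integral_tendsto.mp hZ
      (BoundedContinuousFunction.mkOfCompact ⟨fun x => h x y, hcont y⟩)
    simpa using h1
  set q : ℕ → Y → ℝ := fun n y =>
    min (∫ x, h x y ∂(Z n : Measure X)) (∫ x, h x y ∂(Zl : Measure X)) with hq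
  have qmeas : ∀ n, AEStronglyMeasurable (q n) (ψ.restrict S) := fun n =>
    ((gmeas _ inferInstance).measurable.min (gmeas _ inferInstance).measurable).aestronglyMeasurable
  have qbound : ∀ n, ∀ y, ‖q n y‖ ≤ ∫ x, h x y ∂(Zl : Measure X) := by
    intro n y
    rw [Real.norm_eq_abs, abs_of_nonneg (le_min (gnn _ _) (gnn _ _))]
    exact min_le_right _ _
  have qint : ∀ n, Integrable (q n) (ψ.restrict S) := fun n =>
    Integrable.mono' (gintS _ inferInstance) (qmeas n)
      (Filter.Eventually.of_forall (qbound n))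
  have hqtendsto : Tendsto (fun n => ∫ y in S, q n y ∂ψ) atTop
      (𝓝 (∫ y in S, (∫ x, h x y ∂(Zl : Measure X)) ∂ψ)) := by
    refine tendsto_integral_of_dominated_convergence
      (fun y => ∫ x, h x y ∂(Zl : Measure X)) qmeas (gintS _ inferInstance)
      (fun n => Filter.Eventually.of_forall (qbound n))
      (Filter.Eventually.of_forall fun y => ?_)
    simpa [hq] using (hptwise y).min (tendsto_const_nhds
      (x := ∫ x, h x y ∂(Zl : Measure X)) (f := atTop))
  have habs : ∀ n y, |(∫ x, h x y ∂(Z n : Measure X)) - ∫ x, h x y ∂(Zl : Measure X)| =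
      (∫ x, h x y ∂(Z n : Measure X)) + (∫ x, h x y ∂(Zl : Measure X)) - 2 * q n y := by
    intro n y
    rcases le_total (∫ x, h x y ∂(Z n : Measure X)) (∫ x, h x y ∂(Zl : Measure X)) with hc | hc
    · rw [abs_of_nonpos (by linarith), hq]
      simp only [min_eq_left hc]
      ring
    · rw [abs_of_nonneg (by linarith), hq]
      simp only [min_eq_right hc]
      ring
  have hTeq : ∀ n, ∫ y in S,
        |(∫ x, h x y ∂(Z n : Measure X)) - ∫ x, h x y ∂(Zl : Measure X)| ∂ψ
      = 2 - 2 * ∫ y in S, q n y ∂ψ := by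
    intro n
    rw [integral_congr_ae (Filter.Eventually.of_forall (habs n))]
    have e1 : ∫ y in S,
          ((∫ x, h x y ∂(Z n : Measure X)) + (∫ x, h x y ∂(Zl : Measure X)) - 2 * q n y) ∂ψ
        = (∫ y in S,
            ((∫ x, h x y ∂(Z n : Measure X)) + (∫ x, h x y ∂(Zl : Measure X))) ∂ψ)
          - ∫ y in S, 2 * q n y ∂ψ :=
      integral_sub ((gintS _ inferInstance).add (gintS _ inferInstance)) ((qint n).const_mul 2)
    have e2 : (∫ y in S,
          ((∫ x, h x y ∂(Z n : Measure X)) + (∫ x, h x y ∂(Zl : Measure X))) ∂ψ)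
        = (∫ y in S, (∫ x, h x y ∂(Z n : Measure X)) ∂ψ)
          + ∫ y in S, (∫ x, h x y ∂(Zl : Measure X)) ∂ψ :=
      integral_add (gintS _ inferInstance) (gintS _ inferInstance)
    rw [e1, e2, integral_const_mul, gtot _ inferInstance, gtot _ inferInstance]
    ring
  have hT : Tendsto (fun n => ∫ y in S,
      |(∫ x, h x y ∂(Z n : Measure X)) - ∫ x, h x y ∂(Zl : Measure X)| ∂ψ) atTop (𝓝 0) := by
    simp_rw [hTeq]
    have h2 : Tendsto (fun n => 2 - 2 * ∫ y in S, q n y ∂ψ) atTop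
        (𝓝 (2 - 2 * ∫ y in S, (∫ x, h x y ∂(Zl : Measure X)) ∂ψ)) :=
      (tendsto_const_nhds.sub (hqtendsto.const_mul 2))
    rw [gtot _ inferInstance] at h2
    simpa using h2
  refine squeeze_zero (fun n => Real.iSup_nonneg fun A => abs_nonneg _) (fun n => ?_) hT
  refine ciSup_le fun A => ?_
  have h1 := key (Z n : Measure X) inferInstance A
  have h2 := key (Zl : Measure X) inferInstance A
  rw [h1.2, h2.2]
  have hi1 : Integrable (fun y => ∫ x, h x y ∂(Z n : Measure X)) (ψ.restrict (A ∩ S)) :=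
    (gintS _ inferInstance).mono_measure
      (Measure.restrict_mono Set.inter_subset_right le_rfl)
  have hi2 : Integrable (fun y => ∫ x, h x y ∂(Zl : Measure X)) (ψ.restrict (A ∩ S)) :=
    (gintS _ inferInstance).mono_measure
      (Measure.restrict_mono Set.inter_subset_right le_rfl)
  rw [← integral_sub hi1 hi2]
  calc |∫ y in A ∩ S, ((∫ x, h x y ∂(Z n : Measure X)) - ∫ x, h x y ∂(Zl : Measure X)) ∂ψ|
      ≤ ∫ y in A ∩ S,
        |(∫ x, h x y ∂(Z n : Measure X)) - ∫ x, h x y ∂(Zl : Measure X)| ∂ψ := by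
        simpa [Real.norm_eq_abs] using norm_integral_le_integral_norm
          (fun y => (∫ x, h x y ∂(Z n : Measure X)) - ∫ x, h x y ∂(Zl : Measure X))
          (μ := ψ.restrict (A ∩ S))
    _ ≤ ∫ y in S,
        |(∫ x, h x y ∂(Z n : Measure X)) - ∫ x, h x y ∂(Zl : Measure X)| ∂ψ := by
        refine integral_mono_measure (Measure.restrict_mono Set.inter_subset_right le_rfl)
          (Filter.Eventually.of_forall fun y => abs_nonneg _) ?_
        exact ((gintS _ inferInstance).sub (gintS _ inferInstance)).abs
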